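/- Inductive step for rows of the form 3a: let a ≥ 1, and suppose that every row k < 3a dominates all later rows. Then row 3a dominates all later rows. -/

import Mathlib

abbrev Digit := Fin 3

/-- Base-3 value of a digit string (most significant digit first). -/
def val3 (w : List Digit) : ℕ := w.foldl (fun acc d => 3 * acc + d.val) 0

/-- Helper for `addTwo`, acting on the reversed (least significant digit first) string:
replace each digit `d` by `d - 1 (mod 3)` up to and including the first digit 0;
if no digit 0 occurs, a digit 0 is first prepended at the most significant end
(and then becomes 2). -/
def addTwoAux : List Digit → List Digit
  | [] => [2]
  | d :: rest => if d = 0 then (d + 2) :: rest else (d + 2) :: addTwoAux rest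

/-- Adding two in base 3/2: all digits at or to the right of the rightmost 0
(including that 0) are decreased by 1 modulo 3; if there is no 0, a 0 is first
prepended. -/
def addTwo (w : List Digit) : List Digit := (addTwoAux w.reverse).reverse

open Fin.NatCast in
/-- Binary representation of `j` (digits 0 and 1, most significant first, no leading
zeros), with `binRep 0 = [0]`. -/
def binRep (j : ℕ) : List Digit :=
  if j = 0 then [0] else (Nat.digits 2 j).reverse.map (fun d => (d : Digit))

/-- The grid: row 0 consists of the binary representations in increasing order, and
each subsequent row is obtained entrywise by adding two in base 3/2. -/
def G : ℕ → ℕ → List Digit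
  | 0, j => binRep j
  | i + 1, j => addTwo (G i j)

/-- Row `j` dominates all later rows: every entry of any row below row `j`,
interpreted in base 3, is the last term of a nondegenerate three-term arithmetic
progression whose first two terms are entries of row `j` interpreted in base 3. -/
def Dominates (j : ℕ) : Prop :=
  ∀ i n : ℕ, j < i → ∃ p q : ℕ,
    val3 (G j p) < val3 (G j q) ∧ val3 (G j q) < val3 (G i n) ∧
    val3 (G j p) + val3 (G i n) = 2 * val3 (G j q)

lemma G_succ (i j : ℕ) : G (i+1) j = addTwo (G i j) := rfl

lemma addTwo_append0 (w : List Digit) : addTwo (w ++ [(0:Digit)]) = w ++ [2] := by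
  unfold addTwo
  rw [List.reverse_append]
  show (addTwoAux ((0:Digit) :: w.reverse)).reverse = _
  rw [addTwoAux]
  simp

lemma addTwo_append1 (w : List Digit) : addTwo (w ++ [(1:Digit)]) = addTwo w ++ [0] := by
  unfold addTwo
  rw [List.reverse_append]
  show (addTwoAux ((1:Digit) :: w.reverse)).reverse = _
  rw [addTwoAux]
  rw [if_neg (by decide)]
  simp

lemma addTwo_append2 (w : List Digit) : addTwo (w ++ [(2:Digit)]) = addTwo w ++ [1] := by
  unfold addTwo
  rw [List.reverse_append]
  show (addTwoAux ((2:Digit) :: w.reverse)).reverse = _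
  rw [addTwoAux]
  rw [if_neg (by decide)]
  simp

lemma val3_append (w : List Digit) (d : Digit) :
    val3 (w ++ [d]) = 3 * val3 w + d.val := by
  simp [val3, List.foldl_append]

lemma binRep_even (n : ℕ) (hn : 1 ≤ n) : binRep (2*n) = binRep n ++ [0] := by
  unfold binRep
  rw [if_neg (by omega), if_neg (by omega)]
  rw [Nat.digits_def' (by norm_num : 1 < 2) (by omega : 0 < 2*n)]
  simp [Nat.mul_div_cancel_left, Nat.mul_mod_right]

lemma binRep_odd (n : ℕ) (hn : 1 ≤ n) : binRep (2*n+1) = binRep n ++ [1] := by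
  unfold binRep
  rw [if_neg (by omega), if_neg (by omega)]
  rw [Nat.digits_def' (by norm_num : 1 < 2) (by omega : 0 < 2*n+1)]
  have h1 : (2*n+1) % 2 = 1 := by omega
  have h2 : (2*n+1) / 2 = n := by omega
  rw [h1, h2]
  simp
  rfl

lemma stepE (i s n : ℕ) (hA : G i (2*n) = G s n ++ [0]) :
    G (i+1) (2*n) = G s n ++ [2] ∧ G (i+2) (2*n) = G (s+1) n ++ [1] := by
  have hB : G (i+1) (2*n) = G s n ++ [2] := by
    rw [G_succ, hA, addTwo_append0]
  refine ⟨hB, ?_⟩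
  show addTwo (G (i+1) (2*n)) = _
  rw [hB, addTwo_append2, G_succ]

lemma stepO (i s n : ℕ) (hA : G i (2*n+1) = G s n ++ [1]) :
    G (i+1) (2*n+1) = G (s+1) n ++ [0] ∧ G (i+2) (2*n+1) = G (s+1) n ++ [2] := by
  have hB : G (i+1) (2*n+1) = G (s+1) n ++ [0] := by
    rw [G_succ, hA, addTwo_append1, G_succ]
  refine ⟨hB, ?_⟩
  show addTwo (G (i+1) (2*n+1)) = _
  rw [hB, addTwo_append0]

lemma colE (n k : ℕ) (h : 1 ≤ n ∨ 1 ≤ k) :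
    G (3*k) (2*n) = G (2*k) n ++ [0] ∧
    G (3*k+1) (2*n) = G (2*k) n ++ [2] ∧
    G (3*k+2) (2*n) = G (2*k+1) n ++ [1] := by
  induction k with
  | zero =>
    have hn : 1 ≤ n := by omega
    have hA : G (3*0) (2*n) = G (2*0) n ++ [0] := binRep_even n hn
    obtain ⟨hB, hC⟩ := stepE _ _ _ hA
    exact ⟨hA, hB, hC⟩
  | succ k ihk =>
    have hA : G (3*(k+1)) (2*n) = G (2*(k+1)) n ++ [0] := by
      rcases Nat.eq_zero_or_pos n with rfl | hn
      · rcases Nat.eq_zero_or_pos k with rfl | hk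
        · decide
        · have hC := (ihk (Or.inr hk)).2.2
          have e : 3*(k+1) = (3*k+2)+1 := by ring
          rw [e, G_succ, hC, addTwo_append1, ← G_succ]
          norm_num; ring_nf
      · have hC := (ihk (Or.inl hn)).2.2
        have e : 3*(k+1) = (3*k+2)+1 := by ring
        rw [e, G_succ, hC, addTwo_append1, ← G_succ]
        norm_num; ring_nf
    obtain ⟨hB, hC⟩ := stepE _ _ _ hA
    exact ⟨hA, hB, hC⟩

lemma colO (n k : ℕ) (h : 1 ≤ n ∨ 1 ≤ k) :
    G (3*k) (2*n+1) = G (2*k) n ++ [1] ∧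
    G (3*k+1) (2*n+1) = G (2*k+1) n ++ [0] ∧
    G (3*k+2) (2*n+1) = G (2*k+1) n ++ [2] := by
  induction k with
  | zero =>
    have hn : 1 ≤ n := by omega
    have hA : G (3*0) (2*n+1) = G (2*0) n ++ [1] := binRep_odd n hn
    obtain ⟨hB, hC⟩ := stepO _ _ _ hA
    exact ⟨hA, hB, hC⟩
  | succ k ihk =>
    have hA : G (3*(k+1)) (2*n+1) = G (2*(k+1)) n ++ [1] := by
      rcases Nat.eq_zero_or_pos n with rfl | hn
      · rcases Nat.eq_zero_or_pos k with rfl | hk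
        · have hb1 : G 0 1 = [1] := by
            show binRep 1 = [1]
            unfold binRep
            rw [if_neg (by omega), Nat.digits_def' (by norm_num : 1 < 2) (by omega : 0 < 1)]
            simp
            rfl
          show G 3 1 = G 2 0 ++ [1]
          have h3 : G 3 1 = addTwo (addTwo (addTwo (G 0 1))) := rfl
          rw [h3, hb1]
          decide
        · have hC := (ihk (Or.inr hk)).2.2
          have e : 3*(k+1) = (3*k+2)+1 := by ring
          rw [e, G_succ, hC, addTwo_append2, ← G_succ]
          norm_num; ring_nf
      · have hC := (ihk (Or.inl hn)).2.2
        have e : 3*(k+1) = (3*k+2)+1 := by ring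
        rw [e, G_succ, hC, addTwo_append2, ← G_succ]
        norm_num; ring_nf
    obtain ⟨hB, hC⟩ := stepO _ _ _ hA
    exact ⟨hA, hB, hC⟩

lemma row3a_val0 (a t : ℕ) (ha : 1 ≤ a) :
    val3 (G (3*a) (2*t)) = 3 * val3 (G (2*a) t) := by
  rw [(colE t a (Or.inr ha)).1, val3_append]
  rfl

lemma row3a_val1 (a t : ℕ) (ha : 1 ≤ a) :
    val3 (G (3*a) (2*t+1)) = 3 * val3 (G (2*a) t) + 1 := by
  rw [(colO t a (Or.inr ha)).1, val3_append]
  rfl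

lemma lift (a : ℕ) (ha : 1 ≤ a) (hdom : Dominates (2*a)) (s m : ℕ) (hs : 2*a < s)
    (d x : ℕ) (hd : d ≤ 2) (hx : x = 3 * val3 (G s m) + d) :
    ∃ p q : ℕ, val3 (G (3*a) p) < val3 (G (3*a) q) ∧ val3 (G (3*a) q) < x ∧
      val3 (G (3*a) p) + x = 2 * val3 (G (3*a) q) := by
  obtain ⟨p, q, h1, h2, h3⟩ := hdom s m hs
  interval_cases d
  · exact ⟨2*p, 2*q, by rw [row3a_val0 a p ha, row3a_val0 a q ha]; omega,
      by rw [row3a_val0 a q ha]; omega,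
      by rw [row3a_val0 a p ha, row3a_val0 a q ha]; omega⟩
  · exact ⟨2*p+1, 2*q+1, by rw [row3a_val1 a p ha, row3a_val1 a q ha]; omega,
      by rw [row3a_val1 a q ha]; omega,
      by rw [row3a_val1 a p ha, row3a_val1 a q ha]; omega⟩
  · exact ⟨2*p, 2*q+1, by rw [row3a_val0 a p ha, row3a_val1 a q ha]; omega,
      by rw [row3a_val1 a q ha]; omega,
      by rw [row3a_val0 a p ha, row3a_val1 a q ha]; omega⟩

lemma special (a m x : ℕ) (ha : 1 ≤ a) (hx : x = 3 * val3 (G (2*a) m) + 2) :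
    ∃ p q : ℕ, val3 (G (3*a) p) < val3 (G (3*a) q) ∧ val3 (G (3*a) q) < x ∧
      val3 (G (3*a) p) + x = 2 * val3 (G (3*a) q) := by
  exact ⟨2*m, 2*m+1, by rw [row3a_val0 a m ha, row3a_val1 a m ha]; omega,
    by rw [row3a_val1 a m ha]; omega,
    by rw [row3a_val0 a m ha, row3a_val1 a m ha]; omega⟩


/-- Inductive step for rows of the form `3a`: if every row `k < 3a` dominates all
later rows, then row `3a` dominates all later rows. -/
theorem row_3a_step (a : ℕ) (ha : 1 ≤ a)
    (ih : ∀ k : ℕ, k < 3 * a → Dominates k) : Dominates (3 * a) := by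
  intro i n hi
  have hdom : Dominates (2*a) := ih (2*a) (by omega)
  obtain ⟨k, hk⟩ : ∃ k, i = 3*k ∨ i = 3*k+1 ∨ i = 3*k+2 := ⟨i/3, by omega⟩
  obtain ⟨m, hm⟩ : ∃ m, n = 2*m ∨ n = 2*m+1 := ⟨n/2, by omega⟩
  have hk1 : 1 ≤ k := by omega
  rcases hk with rfl | rfl | rfl <;> rcases hm with rfl | rfl
  · -- i = 3k, n = 2m : d = 0, s = 2k > 2a
    have hx : val3 (G (3*k) (2*m)) = 3 * val3 (G (2*k) m) + 0 := by
      rw [(colE m k (Or.inr hk1)).1, val3_append]; rfl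
    exact lift a ha hdom (2*k) m (by omega) 0 _ (by omega) hx
  · -- i = 3k, n = 2m+1 : d = 1, s = 2k > 2a
    have hx : val3 (G (3*k) (2*m+1)) = 3 * val3 (G (2*k) m) + 1 := by
      rw [(colO m k (Or.inr hk1)).1, val3_append]; rfl
    exact lift a ha hdom (2*k) m (by omega) 1 _ (by omega) hx
  · -- i = 3k+1, n = 2m : d = 2, s = 2k ≥ 2a
    have hx : val3 (G (3*k+1) (2*m)) = 3 * val3 (G (2*k) m) + 2 := by
      rw [(colE m k (Or.inr hk1)).2.1, val3_append]; rfl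
    rcases Nat.lt_or_ge (2*a) (2*k) with h | h
    · exact lift a ha hdom (2*k) m h 2 _ (by omega) hx
    · have hak : k = a := by omega
      rw [hak] at hx ⊢
      exact special a m _ ha hx
  · -- i = 3k+1, n = 2m+1 : d = 0, s = 2k+1 > 2a
    have hx : val3 (G (3*k+1) (2*m+1)) = 3 * val3 (G (2*k+1) m) + 0 := by
      rw [(colO m k (Or.inr hk1)).2.1, val3_append]; rfl
    exact lift a ha hdom (2*k+1) m (by omega) 0 _ (by omega) hx
  · -- i = 3k+2, n = 2m : d = 1, s = 2k+1 > 2a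
    have hx : val3 (G (3*k+2) (2*m)) = 3 * val3 (G (2*k+1) m) + 1 := by
      rw [(colE m k (Or.inr hk1)).2.2, val3_append]; rfl
    exact lift a ha hdom (2*k+1) m (by omega) 1 _ (by omega) hx
  · -- i = 3k+2, n = 2m+1 : d = 2, s = 2k+1 > 2a
    have hx : val3 (G (3*k+2) (2*m+1)) = 3 * val3 (G (2*k+1) m) + 2 := by
      rw [(colO m k (Or.inr hk1)).2.2, val3_append]; rfl
    exact lift a ha hdom (2*k+1) m (by omega) 2 _ (by omega) hx
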